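/- Let a be a prime number with a ≡ 1 (mod 4), and let z ∈ ℂ satisfy a·z⁴ − (2a+1)·z² + a = 0 (so z ≠ 0). Let L = ℚ(z) be the subfield of ℂ generated by z over ℚ and K = ℚ(z + z⁻¹) ⊆ L. Then −1 is a norm for L over K; that is, there exists u ∈ L with N_{L/K}(u) = −1. -/

import Mathlib

open IntermediateField Polynomial Module

set_option maxHeartbeats 4000000
set_option synthInstance.maxHeartbeats 2000000

theorem neg_one_is_norm
    (a : ℕ) (ha : a.Prime) (ha4 : a % 4 = 1)
    (z : ℂ) (hz : (a : ℂ) * z ^ 4 - (2 * (a : ℂ) + 1) * z ^ 2 + (a : ℂ) = 0) :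
    ∃ u : ℚ⟮z⟯,
      Algebra.norm
        (↥ℚ⟮AdjoinSimple.gen ℚ z + (AdjoinSimple.gen ℚ z)⁻¹⟯) u = -1 := by
  have haQ : (a : ℚ) ≠ 0 := Nat.cast_ne_zero.mpr ha.pos.ne'
  have haC : (a : ℂ) ≠ 0 := Nat.cast_ne_zero.mpr ha.pos.ne'
  have hz0 : z ≠ 0 := by
    rintro rfl
    simp at hz
    exact ha.pos.ne' hz
  set g : ℚ⟮z⟯ := AdjoinSimple.gen ℚ z with hgdef
  have hgz : (g : ℂ) = z := rfl
  set K : IntermediateField ℚ ℚ⟮z⟯ := ℚ⟮g + g⁻¹⟯ with hKdef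
  set v : ℚ⟮z⟯ := g - g⁻¹ with hvdef
  -- z is integral over ℚ
  have hzint : IsIntegral ℚ z := by
    rw [← isAlgebraic_iff_isIntegral]
    refine ⟨C (a:ℚ) * X^4 - C (2*(a:ℚ)+1) * X^2 + C (a:ℚ), ?_, ?_⟩
    · intro h
      have h4 := congrArg (fun q => Polynomial.coeff q 4) h
      simp only [coeff_add, coeff_sub, coeff_C_mul, coeff_X_pow, coeff_C, coeff_zero] at h4
      norm_num at h4
      exact ha.pos.ne' h4
    · have h2 : (aeval z) (C (a:ℚ) * X^4 - C (2*(a:ℚ)+1) * X^2 + C (a:ℚ)) =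
          (a:ℂ) * z ^ 4 - (2*(a:ℂ)+1) * z ^ 2 + (a:ℂ) := by
        simp only [map_add, map_sub, map_mul, map_pow, aeval_C, aeval_X, eq_ratCast]
        push_cast
        ring
      rw [h2, hz]
  haveI : FiniteDimensional ℚ ℚ⟮z⟯ := IntermediateField.adjoin.finiteDimensional hzint
  haveI : FiniteDimensional ↥K ℚ⟮z⟯ := FiniteDimensional.right ℚ ↥K ℚ⟮z⟯
  -- v ^ 2 = 1 / a
  have hginv : ((g⁻¹ : ℚ⟮z⟯) : ℂ) = z⁻¹ := by
    rw [IntermediateField.coe_inv, hgz]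
  have hv2 : v ^ 2 = algebraMap ℚ ℚ⟮z⟯ (1/(a:ℚ)) := by
    apply Subtype.ext
    have hcoe : ((v ^ 2 : ℚ⟮z⟯) : ℂ) = (z - z⁻¹) ^ 2 := by
      push_cast [hvdef, hgz, hginv]
      ring
    have hcoe2 : ((algebraMap ℚ ℚ⟮z⟯ (1/(a:ℚ)) : ℚ⟮z⟯) : ℂ) = 1 / (a:ℂ) := by
      rw [← IntermediateField.algebraMap_apply, ← IsScalarTower.algebraMap_apply, eq_ratCast]
      push_cast
      ring
    rw [hcoe, hcoe2]
    field_simp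
    linear_combination hz
  -- ℚ⟮g⟯ = ⊤
  have htop : ℚ⟮g⟯ = (⊤ : IntermediateField ℚ ℚ⟮z⟯) := by
    apply lift_injective
    erw [lift_adjoin_simple, lift_top]
    rfl
  have hwK : g + g⁻¹ ∈ K := mem_adjoin_simple_self ℚ (g + g⁻¹)
  have hgeq : g = algebraMap ℚ ℚ⟮z⟯ (2⁻¹) * ((g + g⁻¹) + v) := by
    rw [hvdef, map_inv₀, map_ofNat]
    ring
  by_cases hvK : v ∈ K
  · -- degenerate case : K = ⊤
    have hKtop : K = ⊤ := by
      rw [eq_top_iff, ← htop, adjoin_simple_le_iff]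
      rw [hgeq]
      exact K.mul_mem (K.algebraMap_mem _) (K.add_mem hwK hvK)
    have hrank : finrank ↥K ℚ⟮z⟯ = 1 := by
      rw [hKtop]; exact IntermediateField.finrank_top
    refine ⟨algebraMap ↥K ℚ⟮z⟯ (-1), ?_⟩
    rw [Algebra.norm_algebraMap, hrank, pow_one]
  · -- the real case : [L : K] = 2
    have hvint : IsIntegral ↥K v := IsIntegral.of_finite ↥K v
    have hvrange : v ∉ (algebraMap ↥K ℚ⟮z⟯).range := by
      rintro ⟨k, hk⟩
      exact hvK (hk ▸ k.2)
    have hdeg : (minpoly ↥K v).natDegree = 2 := by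
      have hle : (minpoly ↥K v).natDegree ≤ 2 := by
        have hdvd : minpoly ↥K v ∣ (X^2 - C (algebraMap ℚ ↥K (1/(a:ℚ)))) := by
          apply minpoly.dvd
          simp only [map_sub, map_pow, aeval_X, aeval_C, hv2]
          rw [← IsScalarTower.algebraMap_apply]
          ring
        have hne : (X^2 - C (algebraMap ℚ ↥K (1/(a:ℚ)))) ≠ 0 :=
          (monic_X_pow_sub_C _ two_ne_zero).ne_zero
        calc (minpoly ↥K v).natDegree ≤ _ := Polynomial.natDegree_le_of_dvd hdvd hne
          _ = 2 := by rw [natDegree_X_pow_sub_C]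
      have hge : 2 ≤ (minpoly ↥K v).natDegree :=
        (minpoly.two_le_natDegree_iff hvint).mpr hvrange
      omega
    have htopv : adjoin ↥K {v} = ⊤ := by
      apply restrictScalars_injective ℚ
      erw [restrictScalars_adjoin, restrictScalars_top, eq_top_iff, ← htop,
        adjoin_simple_le_iff, hgeq]
      exact mul_mem (IntermediateField.algebraMap_mem _ _)
        (add_mem (subset_adjoin ℚ _ (Set.mem_union_left _ hwK))
          (subset_adjoin ℚ _ (Set.mem_union_right _ rfl)))
    have hrank : finrank ↥K ℚ⟮z⟯ = 2 := by
      have h1 := IntermediateField.adjoin.finrank hvint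
      rw [htopv, hdeg] at h1
      rwa [IntermediateField.finrank_top'] at h1
    have li : LinearIndependent ↥K ![(1 : ℚ⟮z⟯), v] := by
      rw [LinearIndependent.pair_iff' one_ne_zero]
      intro c hc
      apply hvrange
      exact ⟨c, by rw [← hc, Algebra.smul_def, mul_one]⟩
    have hcard : Fintype.card (Fin 2) = finrank ↥K ℚ⟮z⟯ := by simp [hrank]
    set b : Basis (Fin 2) ↥K ℚ⟮z⟯ := basisOfLinearIndependentOfCardEqFinrank li hcard with hbdef
    have hb : ⇑b = ![(1 : ℚ⟮z⟯), v] := coe_basisOfLinearIndependentOfCardEqFinrank li hcard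
    have hb0 : b 0 = 1 := by rw [hb]; rfl
    have hb1 : b 1 = v := by rw [hb]; rfl
    -- Fermat two squares
    haveI : Fact a.Prime := ⟨ha⟩
    obtain ⟨r, s, hrs⟩ := Nat.Prime.sq_add_sq (p := a) (by omega)
    have hs0 : (s : ℚ) ≠ 0 := by
      rw [Nat.cast_ne_zero]
      rintro rfl
      norm_num at hrs
      have hdvd : r ∣ a := ⟨r, by rw [← hrs]; ring⟩
      rcases ha.eq_one_or_self_of_dvd r hdvd with h | h
      · rw [h] at hrs; norm_num at hrs; exact ha.one_lt.ne' hrs.symm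
      · rw [h] at hrs; nlinarith [ha.two_le]
    set xq : ℚ := r / s with hxq
    set yq : ℚ := a / s with hyq
    have hrsQ : (r:ℚ)^2 + (s:ℚ)^2 = (a:ℚ) := by exact_mod_cast hrs
    have key : xq * xq - (yq * (1/(a:ℚ))) * yq = -1 := by
      rw [hxq, hyq]
      field_simp
      linear_combination hrsQ
    set xK : ↥K := algebraMap ℚ ↥K xq with hxK
    set yK : ↥K := algebraMap ℚ ↥K yq with hyK
    set cK : ↥K := algebraMap ℚ ↥K (yq * (1/(a:ℚ))) with hcK
    set u : ℚ⟮z⟯ := algebraMap ℚ ℚ⟮z⟯ xq + algebraMap ℚ ℚ⟮z⟯ yq * v with hu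
    have halg : ∀ q : ℚ, algebraMap ↥K ℚ⟮z⟯ (algebraMap ℚ ↥K q) = algebraMap ℚ ℚ⟮z⟯ q := by
      intro q
      rw [← IsScalarTower.algebraMap_apply]
    have e0 : u * b 0 = xK • b 0 + yK • b 1 := by
      rw [hb0, hb1, mul_one, Algebra.smul_def, Algebra.smul_def, halg, halg, mul_one, hu]
    have e1 : u * b 1 = cK • b 0 + xK • b 1 := by
      rw [hb0, hb1, Algebra.smul_def, Algebra.smul_def, halg, halg, mul_one, hu, map_mul]
      linear_combination (algebraMap ℚ ℚ⟮z⟯ yq) * hv2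
    refine ⟨u, ?_⟩
    rw [Algebra.norm_eq_matrix_det b, Matrix.det_fin_two]
    have h00 : Algebra.leftMulMatrix b u 0 0 = xK := by
      rw [Algebra.leftMulMatrix_eq_repr_mul, e0]
      simp
    have h10 : Algebra.leftMulMatrix b u 1 0 = yK := by
      rw [Algebra.leftMulMatrix_eq_repr_mul, e0]
      simp
    have h01 : Algebra.leftMulMatrix b u 0 1 = cK := by
      rw [Algebra.leftMulMatrix_eq_repr_mul, e1]
      simp
    have h11 : Algebra.leftMulMatrix b u 1 1 = xK := by
      rw [Algebra.leftMulMatrix_eq_repr_mul, e1]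
      simp
    rw [h00, h11, h01, h10, hxK, hyK, hcK, ← map_mul, ← map_mul, ← map_sub, key]
    simp
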